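/- Let λ, μ, θ, δ be real numbers with cos θ ≠ 0. Define a = λ cos²θ + μ sin²θ. If a − μ ≥ δ then λ − μ = (a − μ)/cos²θ ≥ a − μ ≥ δ. In particular, in the setting L₁₁ = λΓ² + ΣΛ₂Σ with Γ = diag(cos θᵢ), Σ = diag(sin θᵢ) and Λ₂ diagonal, if the i-th diagonal entry satisfies (L₁₁)_{ii} − (Λ₂)_{ii} ≥ δ > 0, then the eigengap satisfies λ − (Λ₂)_{ii} = ((L₁₁)_{ii} − (Λ₂)_{ii})/cos²θᵢ ≥ (L₁₁)_{ii} − (Λ₂)_{ii} ≥ δ. -/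
import Mathlib


/-- Theorem 9: For real `λ, μ, θ, δ` with `cos θ ≠ 0` and
`a = λ cos²θ + μ sin²θ`, if `a − μ ≥ δ > 0` then
`λ − μ = (a − μ)/cos²θ ≥ a − μ ≥ δ`: the eigengap is larger than the gap between
the eigenvalues of the perturbed space. -/
theorem eigengap_ge_perturbed_gap
    (lam mu θ δ a : ℝ) (hcos : Real.cos θ ≠ 0)
    (ha : a = lam * Real.cos θ ^ 2 + mu * Real.sin θ ^ 2)
    (hδ : 0 < δ) (h : a - mu ≥ δ) :
    lam - mu = (a - mu) / Real.cos θ ^ 2 ∧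
    (a - mu) / Real.cos θ ^ 2 ≥ a - mu ∧
    lam - mu ≥ δ := by
  have hc2 : (0:ℝ) < Real.cos θ ^ 2 := by positivity
  have hs : Real.sin θ ^ 2 = 1 - Real.cos θ ^ 2 := by
    have := Real.sin_sq_add_cos_sq θ; linarith
  have heq : lam - mu = (a - mu) / Real.cos θ ^ 2 := by
    field_simp
    rw [ha, hs]; ring
  have hc2le : Real.cos θ ^ 2 ≤ 1 := Real.cos_sq_le_one θ
  have h2 : (a - mu) / Real.cos θ ^ 2 ≥ a - mu := by
    rw [ge_iff_le, le_div_iff₀ hc2]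
    nlinarith
  exact ⟨heq, h2, by linarith [heq ▸ h2]⟩
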